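/- For an overlapping masked IFS with mask point q, if x, y ∈ [0,1] with x > y, then τ_q^-(x) ≻ τ_q^+(y) in the lexicographic order on {0,1}^∞. Consequently, both sections τ_q^+ and τ_q^- are strictly increasing functions from [0,1] to {0,1}^∞ (with lexicographic order). -/

import Mathlib

open Set Filter Topology

/-- Strict lexicographic order on binary strings. -/
def lexLt (σ ω : ℕ → Bool) : Prop :=
  ∃ k, (∀ j < k, σ j = ω j) ∧ σ k < ω k

/-- Lexicographic order on binary strings. -/
def lexLe (σ ω : ℕ → Bool) : Prop := lexLt σ ω ∨ σ = ω

/-- n-fold shift. -/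
def shiftn (n : ℕ) (ω : ℕ → Bool) : ℕ → Bool := fun k => ω (k + n)

/-- Plus dynamical system: boundary point goes to the 0-branch inverse `g1` side, i.e. `x ≥ q` uses `g1`. -/
noncomputable def Tplus (g0 g1 : ℝ → ℝ) (q : ℝ) (x : ℝ) : ℝ := if x < q then g0 x else g1 x

noncomputable def Tminus (g0 g1 : ℝ → ℝ) (q : ℝ) (x : ℝ) : ℝ := if x ≤ q then g0 x else g1 x

/-- Itinerary under the plus system. -/
noncomputable def tauPlus (g0 g1 : ℝ → ℝ) (q : ℝ) (x : ℝ) : ℕ → Bool :=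
  fun n => decide (q ≤ (Tplus g0 g1 q)^[n] x)

/-- Itinerary under the minus system. -/
noncomputable def tauMinus (g0 g1 : ℝ → ℝ) (q : ℝ) (x : ℝ) : ℕ → Bool :=
  fun n => decide (q < (Tminus g0 g1 q)^[n] x)

/-- Coding map of the uniform IFS with ratio `a`. -/
noncomputable def piU (a : ℝ) (ω : ℕ → Bool) : ℝ := (1 - a) * ∑' k : ℕ, (cond (ω k) (a ^ k) 0)

/-- `wordMap u0 u1 σ k = f_{σ|k} = f_{σ 0} ∘ ⋯ ∘ f_{σ k}`. -/
def wordMap (u0 u1 : ℝ → ℝ) (σ : ℕ → Bool) : ℕ → ℝ → ℝ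
  | 0 => cond (σ 0) u1 u0
  | (k+1) => fun x => wordMap u0 u1 σ k ((cond (σ (k+1)) u1 u0) x)

/-- Coding map of the IFS `(u0, u1)`. -/
noncomputable def piCode (u0 u1 : ℝ → ℝ) (σ : ℕ → Bool) : ℝ :=
  limUnder atTop (fun k => wordMap u0 u1 σ k 0)

/-- `h` is a homeomorphism of `[0,1]` onto itself. -/
def IsIccHomeo (h : ℝ → ℝ) : Prop :=
  ∃ h' : ℝ → ℝ, ContinuousOn h (Icc 0 1) ∧ ContinuousOn h' (Icc 0 1) ∧
    MapsTo h (Icc 0 1) (Icc 0 1) ∧ MapsTo h' (Icc 0 1) (Icc 0 1) ∧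
    (∀ x ∈ Icc (0:ℝ) 1, h' (h x) = x) ∧ (∀ y ∈ Icc (0:ℝ) 1, h (h' y) = y)

lemma aux_lexLt_trans {a b c : ℕ → Bool} (h1 : lexLt a b) (h2 : lexLt b c) : lexLt a c := by
  obtain ⟨k, hk, hkl⟩ := h1
  obtain ⟨m, hm, hml⟩ := h2
  rcases lt_trichotomy k m with h | rfl | h
  · exact ⟨k, fun j hj => (hk j hj).trans (hm j (hj.trans h)), by rw [← hm k h]; exact hkl⟩
  · exact ⟨k, fun j hj => (hk j hj).trans (hm j hj), lt_trans hkl hml⟩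
  · exact ⟨m, fun j hj => (hk j (hj.trans h)).trans (hm j hj), by rw [hk m h]; exact hml⟩

lemma aux_lexLt_of_lexLt_of_lexLe {a b c : ℕ → Bool} (h1 : lexLt a b) (h2 : lexLe b c) :
    lexLt a c := by
  rcases h2 with h2 | rfl
  · exact aux_lexLt_trans h1 h2
  · exact h1

lemma aux_lexLt_of_lexLe_of_lexLt {a b c : ℕ → Bool} (h1 : lexLe a b) (h2 : lexLt b c) :
    lexLt a c := by
  rcases h1 with h1 | rfl
  · exact aux_lexLt_trans h1 h2
  · exact h2

lemma tauMinus_lexLe_tauPlus (g0 g1 : ℝ → ℝ) (q z : ℝ) :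
    lexLe (tauMinus g0 g1 q z) (tauPlus g0 g1 q z) := by
  classical
  have orb : ∀ n, (∀ j < n, tauMinus g0 g1 q z j = tauPlus g0 g1 q z j) →
      (Tminus g0 g1 q)^[n] z = (Tplus g0 g1 q)^[n] z := by
    intro n
    induction n with
    | zero => intro _; rfl
    | succ n ih =>
      intro h
      have heq := ih (fun j hj => h j (hj.trans (Nat.lt_succ_self n)))
      have hagree := h n (Nat.lt_succ_self n)
      simp only [tauMinus, tauPlus] at hagree
      rw [heq] at hagree
      rw [Function.iterate_succ_apply', Function.iterate_succ_apply', heq]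
      set w := (Tplus g0 g1 q)^[n] z with hw
      have hne : w ≠ q := by
        intro he
        rw [he] at hagree
        simp at hagree
      simp only [Tminus, Tplus]
      by_cases hcase : w < q
      · rw [if_pos hcase.le, if_pos hcase]
      · rw [if_neg (fun hle => hcase (lt_of_le_of_ne hle hne)), if_neg hcase]
  by_cases hall : ∀ n, tauMinus g0 g1 q z n = tauPlus g0 g1 q z n
  · exact Or.inr (funext hall)
  · push_neg at hall
    left
    have hkne := Nat.find_spec hall
    have hkmin : ∀ j < Nat.find hall, tauMinus g0 g1 q z j = tauPlus g0 g1 q z j := by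
      intro j hj
      have := Nat.find_min hall hj
      simpa using this
    have heq := orb (Nat.find hall) hkmin
    refine ⟨Nat.find hall, hkmin, lt_of_le_of_ne ?_ hkne⟩
    show decide (q < (Tminus g0 g1 q)^[Nat.find hall] z) ≤ decide (q ≤ (Tplus g0 g1 q)^[Nat.find hall] z)
    rw [heq]
    by_cases hc : q < (Tplus g0 g1 q)^[Nat.find hall] z
    · rw [decide_eq_true hc, decide_eq_true hc.le]
    · rw [decide_eq_false hc]
      exact Bool.false_le _

/-- Statement 1 and 2 of Theorem 5 (address-space theorem): if `x > y` then
`τ_q^-(x) ≻ τ_q^+(y)`, and both sections are strictly increasing. -/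
theorem stmt3
    (f0 f1 g0 g1 : ℝ → ℝ) (q : ℝ)
    (hf0m : StrictMonoOn f0 (Icc 0 1)) (hf1m : StrictMonoOn f1 (Icc 0 1))
    (hf0c : ContinuousOn f0 (Icc 0 1)) (hf1c : ContinuousOn f1 (Icc 0 1))
    (hf0map : MapsTo f0 (Icc 0 1) (Icc 0 1)) (hf1map : MapsTo f1 (Icc 0 1) (Icc 0 1))
    (hf0lip : ∃ c, 0 ≤ c ∧ c < 1 ∧ ∀ x ∈ Icc (0:ℝ) 1, ∀ y ∈ Icc (0:ℝ) 1, |f0 x - f0 y| ≤ c * |x - y|)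
    (hf1lip : ∃ c, 0 ≤ c ∧ c < 1 ∧ ∀ x ∈ Icc (0:ℝ) 1, ∀ y ∈ Icc (0:ℝ) 1, |f1 x - f1 y| ≤ c * |x - y|)
    (hf00 : f0 0 = 0) (hf11 : f1 1 = 1)
    (hf10pos : 0 < f1 0) (hoverf0f1 : f1 0 < f0 1) (hf01lt : f0 1 < 1)
    (hq : q ∈ Ioo (f1 0) (f0 1))
    (hg0 : ∀ x ∈ Icc (0:ℝ) 1, g0 (f0 x) = x) (hg1 : ∀ x ∈ Icc (0:ℝ) 1, g1 (f1 x) = x) :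
    (∀ x ∈ Icc (0:ℝ) 1, ∀ y ∈ Icc (0:ℝ) 1, y < x →
        lexLt (tauPlus g0 g1 q y) (tauMinus g0 g1 q x)) ∧
    (∀ x ∈ Icc (0:ℝ) 1, ∀ y ∈ Icc (0:ℝ) 1, y < x →
        lexLt (tauPlus g0 g1 q y) (tauPlus g0 g1 q x) ∧
        lexLt (tauMinus g0 g1 q y) (tauMinus g0 g1 q x)) := by
  classical
  obtain ⟨c0, hc00, hc01, hlip0⟩ := hf0lip
  obtain ⟨c1, hc10, hc11, hlip1⟩ := hf1lip
  set c : ℝ := max (max c0 c1) (1/2) with hcdef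
  have hcpos : 0 < c := lt_of_lt_of_le (by norm_num) (le_max_right _ _)
  have hclt : c < 1 := max_lt (max_lt hc01 hc11) (by norm_num)
  have hlip0' : ∀ u ∈ Icc (0:ℝ) 1, ∀ v ∈ Icc (0:ℝ) 1, |f0 u - f0 v| ≤ c * |u - v| := by
    intro u hu v hv
    have h1 : c0 ≤ c := le_trans (le_max_left _ _) (le_max_left _ _)
    exact (hlip0 u hu v hv).trans (by nlinarith [abs_nonneg (u - v)])
  have hlip1' : ∀ u ∈ Icc (0:ℝ) 1, ∀ v ∈ Icc (0:ℝ) 1, |f1 u - f1 v| ≤ c * |u - v| := by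
    intro u hu v hv
    have h1 : c1 ≤ c := le_trans (le_max_right _ _) (le_max_left _ _)
    exact (hlip1 u hu v hv).trans (by nlinarith [abs_nonneg (u - v)])
  have hsurj0 : ∀ z, 0 ≤ z → z ≤ q → ∃ a ∈ Icc (0:ℝ) 1, f0 a = z := by
    intro z h1 h2
    have h3 : z ≤ f0 1 := h2.trans (le_of_lt hq.2)
    have h4 := intermediate_value_Icc (zero_le_one) hf0c
    rw [hf00] at h4
    obtain ⟨a, ha, hfa⟩ := h4 ⟨h1, h3⟩
    exact ⟨a, ha, hfa⟩
  have hsurj1 : ∀ z, q ≤ z → z ≤ 1 → ∃ a ∈ Icc (0:ℝ) 1, f1 a = z := by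
    intro z h1 h2
    have h3 : f1 0 ≤ z := (le_of_lt hq.1).trans h1
    have h4 := intermediate_value_Icc (zero_le_one) hf1c
    rw [hf11] at h4
    obtain ⟨a, ha, hfa⟩ := h4 ⟨h3, h2⟩
    exact ⟨a, ha, hfa⟩
  have step0 : ∀ u v : ℝ, 0 ≤ u → v ≤ q → u < v →
      g0 u ∈ Icc (0:ℝ) 1 ∧ g0 v ∈ Icc (0:ℝ) 1 ∧ g0 u < g0 v ∧ v - u ≤ c * (g0 v - g0 u) := by
    intro u v hu hv huv
    obtain ⟨a, ha, hfa⟩ := hsurj0 u hu (le_of_lt (huv.trans_le hv))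
    obtain ⟨b, hb, hfb⟩ := hsurj0 v (hu.trans huv.le) hv
    have hgu : g0 u = a := by rw [← hfa, hg0 a ha]
    have hgv : g0 v = b := by rw [← hfb, hg0 b hb]
    have hab : a < b := by
      rw [← hf0m.lt_iff_lt ha hb, hfa, hfb]; exact huv
    have hlipuse := hlip0' b hb a ha
    rw [hfa, hfb] at hlipuse
    rw [abs_of_nonneg (by linarith), abs_of_nonneg (by linarith)] at hlipuse
    exact ⟨hgu ▸ ha, hgv ▸ hb, by rw [hgu, hgv]; exact hab, by rw [hgu, hgv]; linarith⟩
  have step1 : ∀ u v : ℝ, q ≤ u → v ≤ 1 → u < v →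
      g1 u ∈ Icc (0:ℝ) 1 ∧ g1 v ∈ Icc (0:ℝ) 1 ∧ g1 u < g1 v ∧ v - u ≤ c * (g1 v - g1 u) := by
    intro u v hu hv huv
    obtain ⟨a, ha, hfa⟩ := hsurj1 u hu (le_of_lt (huv.trans_le hv))
    obtain ⟨b, hb, hfb⟩ := hsurj1 v (hu.trans huv.le) hv
    have hgu : g1 u = a := by rw [← hfa, hg1 a ha]
    have hgv : g1 v = b := by rw [← hfb, hg1 b hb]
    have hab : a < b := by
      rw [← hf1m.lt_iff_lt ha hb, hfa, hfb]; exact huv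
    have hlipuse := hlip1' b hb a ha
    rw [hfa, hfb] at hlipuse
    rw [abs_of_nonneg (by linarith), abs_of_nonneg (by linarith)] at hlipuse
    exact ⟨hgu ▸ ha, hgv ▸ hb, by rw [hgu, hgv]; exact hab, by rw [hgu, hgv]; linarith⟩
  have main : ∀ x ∈ Icc (0:ℝ) 1, ∀ y ∈ Icc (0:ℝ) 1, y < x →
      lexLt (tauPlus g0 g1 q y) (tauMinus g0 g1 q x) := by
    intro x hx y hy hyx
    have key : ∀ n, (∀ j < n, tauPlus g0 g1 q y j = tauMinus g0 g1 q x j) →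
        (Tplus g0 g1 q)^[n] y ∈ Icc (0:ℝ) 1 ∧ (Tminus g0 g1 q)^[n] x ∈ Icc (0:ℝ) 1 ∧
        (Tplus g0 g1 q)^[n] y < (Tminus g0 g1 q)^[n] x ∧
        x - y ≤ c ^ n * ((Tminus g0 g1 q)^[n] x - (Tplus g0 g1 q)^[n] y) := by
      intro n
      induction n with
      | zero =>
        intro _
        simp only [Function.iterate_zero_apply, pow_zero, one_mul]
        exact ⟨hy, hx, hyx, le_refl _⟩
      | succ n ih =>
        intro h
        obtain ⟨hyn, hxn, hlt, hbd⟩ := ih (fun j hj => h j (hj.trans (Nat.lt_succ_self n)))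
        have hagree := h n (Nat.lt_succ_self n)
        simp only [tauPlus, tauMinus] at hagree
        set yn := (Tplus g0 g1 q)^[n] y with hyndef
        set xn := (Tminus g0 g1 q)^[n] x with hxndef
        rw [Function.iterate_succ_apply', Function.iterate_succ_apply', ← hyndef, ← hxndef]
        by_cases hcase : q ≤ yn
        · have hq1 : q < xn := by
            rw [decide_eq_true hcase] at hagree
            exact of_decide_eq_true hagree.symm
          obtain ⟨hm1, hm2, hlt', hbd'⟩ := step1 yn xn hcase hxn.2 hlt
          have ht1 : Tplus g0 g1 q yn = g1 yn := by
            simp only [Tplus]; rw [if_neg (not_lt.mpr hcase)]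
          have ht2 : Tminus g0 g1 q xn = g1 xn := by
            simp only [Tminus]; rw [if_neg (not_le.mpr hq1)]
          rw [ht1, ht2]
          refine ⟨hm1, hm2, hlt', ?_⟩
          calc x - y ≤ c ^ n * (xn - yn) := hbd
            _ ≤ c ^ n * (c * (g1 xn - g1 yn)) :=
                mul_le_mul_of_nonneg_left hbd' (pow_nonneg hcpos.le n)
            _ = c ^ (n + 1) * (g1 xn - g1 yn) := by ring
        · have hylt : yn < q := not_le.mp hcase
          have hq1 : xn ≤ q := by
            rw [decide_eq_false hcase] at hagree
            exact not_lt.mp (of_decide_eq_false hagree.symm)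
          obtain ⟨hm1, hm2, hlt', hbd'⟩ := step0 yn xn hyn.1 hq1 hlt
          have ht1 : Tplus g0 g1 q yn = g0 yn := by
            simp only [Tplus]; rw [if_pos hylt]
          have ht2 : Tminus g0 g1 q xn = g0 xn := by
            simp only [Tminus]; rw [if_pos hq1]
          rw [ht1, ht2]
          refine ⟨hm1, hm2, hlt', ?_⟩
          calc x - y ≤ c ^ n * (xn - yn) := hbd
            _ ≤ c ^ n * (c * (g0 xn - g0 yn)) :=
                mul_le_mul_of_nonneg_left hbd' (pow_nonneg hcpos.le n)
            _ = c ^ (n + 1) * (g0 xn - g0 yn) := by ring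
    have hdiff : ∃ k, tauPlus g0 g1 q y k ≠ tauMinus g0 g1 q x k := by
      by_contra hcon
      push_neg at hcon
      have hc0 : Tendsto (fun n => c ^ n) atTop (𝓝 (0:ℝ)) :=
        tendsto_pow_atTop_nhds_zero_of_lt_one hcpos.le hclt
      have hle : ∀ n, x - y ≤ c ^ n := by
        intro n
        obtain ⟨hyn, hxn, _, hbd⟩ := key n (fun j _ => hcon j)
        calc x - y ≤ c ^ n * ((Tminus g0 g1 q)^[n] x - (Tplus g0 g1 q)^[n] y) := hbd
          _ ≤ c ^ n * 1 :=
              mul_le_mul_of_nonneg_left (by linarith [hxn.2, hyn.1]) (pow_nonneg hcpos.le n)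
          _ = c ^ n := mul_one _
      have := ge_of_tendsto hc0 (Filter.Eventually.of_forall hle)
      linarith
    have hkne := Nat.find_spec hdiff
    have hkmin : ∀ j < Nat.find hdiff, tauPlus g0 g1 q y j = tauMinus g0 g1 q x j := by
      intro j hj
      have := Nat.find_min hdiff hj
      simpa using this
    obtain ⟨hyk, hxk, hltk, _⟩ := key (Nat.find hdiff) hkmin
    refine ⟨Nat.find hdiff, hkmin, ?_⟩
    by_cases hcase : q ≤ (Tplus g0 g1 q)^[Nat.find hdiff] y
    · refine absurd ?_ hkne
      show decide (q ≤ (Tplus g0 g1 q)^[Nat.find hdiff] y) = decide (q < (Tminus g0 g1 q)^[Nat.find hdiff] x)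
      rw [decide_eq_true hcase, decide_eq_true (lt_of_le_of_lt hcase hltk)]
    · have hp : tauPlus g0 g1 q y (Nat.find hdiff) = false := by
        exact decide_eq_false hcase
      have hm : tauMinus g0 g1 q x (Nat.find hdiff) = true := by
        cases hmm : tauMinus g0 g1 q x (Nat.find hdiff)
        · exact absurd (hp.trans hmm.symm) hkne
        · rfl
      rw [hp, hm]
      exact Bool.false_lt_true
  refine ⟨main, fun x hx y hy hyx => ⟨?_, ?_⟩⟩
  · exact aux_lexLt_of_lexLt_of_lexLe (main x hx y hy hyx) (tauMinus_lexLe_tauPlus g0 g1 q x)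
  · exact aux_lexLt_of_lexLe_of_lexLt (tauMinus_lexLe_tauPlus g0 g1 q y) (main x hx y hy hyx)
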